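/- Let G be a finite graph with nonnegative real edge weights containing an urban-renewal patch with weights w, x, y, z satisfying wz + xy ≠ 0, and let G' be the urban-renewed graph. Then the total weight of the perfect matchings of G that contain all four pendant edges aA, bB, cC, dD equals (wz + xy) times the total weight of the perfect matchings of G' that contain either both of the edges AB and CD, or both of the edges AC and BD. -/

import Mathlib

open scoped Classical

/-- A finset `M` of edges is a perfect matching of the graph `G` relative to the
vertex set `S`: every edge of `M` is an edge of `G`, and every vertex of `S`
belongs to exactly one edge of `M`. -/
def IsPM {V : Type} (G : SimpleGraph V) (S : Set V) (M : Finset (Sym2 V)) : Prop :=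
  (∀ e ∈ M, e ∈ G.edgeSet) ∧ ∀ v ∈ S, ∃! e, e ∈ M ∧ v ∈ e

/-- `mSum G S ω` is the sum, over all perfect matchings `M` of `G` relative to the
vertex set `S`, of the product of the `ω`-weights of the edges of `M`. -/
noncomputable def mSum {V : Type} (G : SimpleGraph V) (S : Set V) (ω : Sym2 V → ℝ) : ℝ :=
  ∑ᶠ M ∈ {M : Finset (Sym2 V) | IsPM G S M}, ∏ e ∈ M, ω e

/-- `G` together with the weights `ω` contains an urban-renewal patch on the eight
distinct vertices `A B C D a b c d`, with inner-edge weights `w x y z` and pendant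
edges `aA, bB, cC, dD` of weight `1`. -/
structure UrbanPatch {V : Type} (G : SimpleGraph V) (ω : Sym2 V → ℝ)
    (A B C D a b c d : V) (w x y z : ℝ) : Prop where
  distinct : List.Pairwise (· ≠ ·) [A, B, C, D, a, b, c, d]
  adj_a : ∀ v, G.Adj a v ↔ v = b ∨ v = c ∨ v = A
  adj_b : ∀ v, G.Adj b v ↔ v = a ∨ v = d ∨ v = B
  adj_c : ∀ v, G.Adj c v ↔ v = a ∨ v = d ∨ v = C
  adj_d : ∀ v, G.Adj d v ↔ v = b ∨ v = c ∨ v = D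
  wt_ab : ω s(a, b) = w
  wt_ac : ω s(a, c) = x
  wt_bd : ω s(b, d) = y
  wt_cd : ω s(c, d) = z
  wt_aA : ω s(a, A) = 1
  wt_bB : ω s(b, B) = 1
  wt_cC : ω s(c, C) = 1
  wt_dD : ω s(d, D) = 1
  nonadj_AB : ¬ G.Adj A B
  nonadj_AC : ¬ G.Adj A C
  nonadj_AD : ¬ G.Adj A D
  nonadj_BC : ¬ G.Adj B C
  nonadj_BD : ¬ G.Adj B D
  nonadj_CD : ¬ G.Adj C D

/-- The urban-renewed graph: delete the four inner vertices `a b c d` together with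
all their incident edges, and add the four new edges `AB, AC, BD, CD`. -/
def renewGraph {V : Type} (G : SimpleGraph V) (A B C D a b c d : V) : SimpleGraph V :=
  SimpleGraph.fromRel fun u v =>
    (G.Adj u v ∧ u ∉ ({a, b, c, d} : Set V) ∧ v ∉ ({a, b, c, d} : Set V)) ∨
    (u = A ∧ v = B) ∨ (u = A ∧ v = C) ∨ (u = B ∧ v = D) ∨ (u = C ∧ v = D)

/-- The urban-renewed weights: the new edges `AB, AC, BD, CD` get weights
`z/(wz+xy), y/(wz+xy), x/(wz+xy), w/(wz+xy)`; other edges keep their weights. -/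
noncomputable def renewWeight {V : Type} (ω : Sym2 V → ℝ) (A B C D : V)
    (w x y z : ℝ) : Sym2 V → ℝ := fun e =>
  if e = s(A, B) then z / (w * z + x * y)
  else if e = s(A, C) then y / (w * z + x * y)
  else if e = s(B, D) then x / (w * z + x * y)
  else if e = s(C, D) then w / (w * z + x * y)
  else ω e


/-- `mSumP G S ω P` is the sum, over all perfect matchings `M` of `G` relative to
the vertex set `S` that moreover satisfy the predicate `P`, of the product of the
`ω`-weights of the edges of `M`. -/
noncomputable def mSumP {V : Type} (G : SimpleGraph V) (S : Set V) (ω : Sym2 V → ℝ)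
    (P : Finset (Sym2 V) → Prop) : ℝ :=
  ∑ᶠ M ∈ {M : Finset (Sym2 V) | IsPM G S M ∧ P M}, ∏ e ∈ M, ω e

/-! ### Auxiliary definitions and lemmas -/

/-- vertices outside the patch -/
def TSet {V : Type} (A B C D a b c d : V) : Set V :=
  {v | v ≠ A ∧ v ≠ B ∧ v ≠ C ∧ v ≠ D ∧ v ≠ a ∧ v ≠ b ∧ v ≠ c ∧ v ≠ d}

lemma mem_TSet {V : Type} {A B C D a b c d v : V} :
    v ∈ TSet A B C D a b c d ↔
      v ≠ A ∧ v ≠ B ∧ v ≠ C ∧ v ≠ D ∧ v ≠ a ∧ v ≠ b ∧ v ≠ c ∧ v ≠ d := Iff.rfl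

/-- matchings of the core (everything outside the patch) -/
def coreSet {V : Type} (G : SimpleGraph V) (A B C D a b c d : V) : Set (Finset (Sym2 V)) :=
  {M | (∀ e ∈ M, e ∈ G.edgeSet) ∧ (∀ v ∈ TSet A B C D a b c d, ∃! e, e ∈ M ∧ v ∈ e) ∧
    ∀ e ∈ M, ∀ v ∈ e, v ∈ TSet A B C D a b c d}

lemma cover_one {V : Type} {M : Finset (Sym2 V)} {e₀ : Sym2 V} {v : V}
    (he₀ : e₀ ∈ M) (hv : v ∈ e₀) (huniq : ∀ e ∈ M, v ∈ e → e = e₀) :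
    ∃! e, e ∈ M ∧ v ∈ e :=
  ⟨e₀, ⟨he₀, hv⟩, fun e he => huniq e he.1 he.2⟩

lemma union_sum {V : Type} [Fintype V] (ω : Sym2 V → ℝ) (E : Finset (Sym2 V))
    (s t : Set (Finset (Sym2 V)))
    (h1 : ∀ M ∈ t, Disjoint M E ∧ M ∪ E ∈ s)
    (h2 : ∀ N ∈ s, N \ E ∈ t ∧ E ⊆ N) :
    ∑ᶠ N ∈ s, ∏ e ∈ N, ω e = (∏ e ∈ E, ω e) * ∑ᶠ M ∈ t, ∏ e ∈ M, ω e := by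
  have hs : s.Finite := Set.toFinite s
  have ht : t.Finite := Set.toFinite t
  rw [← hs.coe_toFinset, ← ht.coe_toFinset, finsum_mem_coe_finset, finsum_mem_coe_finset,
    Finset.mul_sum]
  refine Finset.sum_bij' (fun N _ => N \ E) (fun M _ => M ∪ E) ?_ ?_ ?_ ?_ ?_
  · intro N hN
    rw [Set.Finite.mem_toFinset] at hN ⊢
    exact (h2 N hN).1
  · intro M hM
    rw [Set.Finite.mem_toFinset] at hM ⊢
    exact (h1 M hM).2
  · intro N hN
    rw [Set.Finite.mem_toFinset] at hN
    exact Finset.sdiff_union_of_subset (h2 N hN).2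
  · intro M hM
    rw [Set.Finite.mem_toFinset] at hM
    exact Finset.union_sdiff_cancel_right (h1 M hM).1
  · intro N hN
    rw [Set.Finite.mem_toFinset] at hN
    rw [mul_comm, ← Finset.prod_union (Finset.sdiff_disjoint),
      Finset.sdiff_union_of_subset (h2 N hN).2]

lemma left_h1 {V : Type} {G : SimpleGraph V} {ω : Sym2 V → ℝ} {A B C D a b c d : V}
    {w x y z : ℝ} (hp : UrbanPatch G ω A B C D a b c d w x y z) :
    ∀ M ∈ coreSet G A B C D a b c d,
      Disjoint M ({s(a,A), s(b,B), s(c,C), s(d,D)} : Finset (Sym2 V)) ∧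
      M ∪ {s(a,A), s(b,B), s(c,C), s(d,D)} ∈
        {N : Finset (Sym2 V) | IsPM G Set.univ N ∧
          (s(a,A) ∈ N ∧ s(b,B) ∈ N ∧ s(c,C) ∈ N ∧ s(d,D) ∈ N)} := by
  have hdist := hp.distinct
  simp only [List.pairwise_cons, List.mem_cons, List.not_mem_nil, or_false, forall_eq_or_imp,
    forall_eq, List.Pairwise.nil, and_true] at hdist
  obtain ⟨⟨hAB, hAC, hAD, hAa, hAb, hAc, hAd⟩, ⟨hBC, hBD, hBa, hBb, hBc, hBd⟩,
    ⟨hCD, hCa, hCb, hCc, hCd⟩, ⟨hDa, hDb, hDc, hDd⟩, ⟨hab, hac, had⟩, ⟨hbc, hbd⟩, hcd, -⟩ := hdist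
  intro M hM
  obtain ⟨hMe, hMcov, hMT⟩ := hM
  have hET : ∀ e ∈ ({s(a,A), s(b,B), s(c,C), s(d,D)} : Finset (Sym2 V)), ∀ u ∈ e,
      u ∉ TSet A B C D a b c d := by
    intro e he u hu huT
    rw [mem_TSet] at huT
    simp only [Finset.mem_insert, Finset.mem_singleton] at he
    rcases he with rfl | rfl | rfl | rfl <;> rw [Sym2.mem_iff] at hu <;>
      rcases hu with rfl | rfl <;> tauto
  have hdisj : Disjoint M ({s(a,A), s(b,B), s(c,C), s(d,D)} : Finset (Sym2 V)) := by
    rw [Finset.disjoint_left]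
    intro e heM heE
    exact hET e heE e.out.1 (Sym2.out_fst_mem e) (hMT e heM e.out.1 (Sym2.out_fst_mem e))
  refine ⟨hdisj, ⟨?_, ?_⟩, ?_, ?_, ?_, ?_⟩
  · -- edges
    intro e he
    rcases Finset.mem_union.1 he with h | h
    · exact hMe e h
    · simp only [Finset.mem_insert, Finset.mem_singleton] at h
      rcases h with rfl | rfl | rfl | rfl
      · exact G.mem_edgeSet.mpr ((hp.adj_a A).mpr (Or.inr (Or.inr rfl)))
      · exact G.mem_edgeSet.mpr ((hp.adj_b B).mpr (Or.inr (Or.inr rfl)))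
      · exact G.mem_edgeSet.mpr ((hp.adj_c C).mpr (Or.inr (Or.inr rfl)))
      · exact G.mem_edgeSet.mpr ((hp.adj_d D).mpr (Or.inr (Or.inr rfl)))
  · -- coverage
    intro v _
    by_cases hvT : v ∈ TSet A B C D a b c d
    · obtain ⟨e, ⟨heM, hve⟩, hu⟩ := hMcov v hvT
      refine cover_one (Finset.mem_union_left _ heM) hve ?_
      intro e' he' hve'
      rcases Finset.mem_union.1 he' with h | h
      · exact hu e' ⟨h, hve'⟩
      · exact absurd hvT (hET e' h v hve')
    · have h8 : v = A ∨ v = B ∨ v = C ∨ v = D ∨ v = a ∨ v = b ∨ v = c ∨ v = d := by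
        by_contra hc
        push_neg at hc
        exact hvT (mem_TSet.mpr hc)
      have hEuniq : ∀ e₁ ∈ ({s(a,A), s(b,B), s(c,C), s(d,D)} : Finset (Sym2 V)),
          ∀ e₂ ∈ ({s(a,A), s(b,B), s(c,C), s(d,D)} : Finset (Sym2 V)),
          v ∈ e₁ → v ∈ e₂ → e₁ = e₂ := by
        intro e₁ h1 e₂ h2 hv1 hv2
        simp only [Finset.mem_insert, Finset.mem_singleton] at h1 h2
        rcases h1 with rfl | rfl | rfl | rfl <;> rcases h2 with rfl | rfl | rfl | rfl <;>
          first
          | rfl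
          | (rw [Sym2.mem_iff] at hv1 hv2; exfalso;
             rcases hv1 with rfl | rfl <;> rcases hv2 with rfl | rfl <;> tauto)
      have hex : ∃ e₀ ∈ ({s(a,A), s(b,B), s(c,C), s(d,D)} : Finset (Sym2 V)), v ∈ e₀ := by
        rcases h8 with h | h | h | h | h | h | h | h
        · exact ⟨s(a,A), by simp, by simp [h]⟩
        · exact ⟨s(b,B), by simp, by simp [h]⟩
        · exact ⟨s(c,C), by simp, by simp [h]⟩
        · exact ⟨s(d,D), by simp, by simp [h]⟩
        · exact ⟨s(a,A), by simp, by simp [h]⟩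
        · exact ⟨s(b,B), by simp, by simp [h]⟩
        · exact ⟨s(c,C), by simp, by simp [h]⟩
        · exact ⟨s(d,D), by simp, by simp [h]⟩
      obtain ⟨e₀, he₀E, hve₀⟩ := hex
      refine cover_one (Finset.mem_union_right _ he₀E) hve₀ ?_
      intro e' he' hve'
      rcases Finset.mem_union.1 he' with h | h
      · exact absurd (hMT e' h v hve') hvT
      · exact hEuniq e' h e₀ he₀E hve' hve₀
  · exact Finset.mem_union_right _ (by simp)
  · exact Finset.mem_union_right _ (by simp)
  · exact Finset.mem_union_right _ (by simp)
  · exact Finset.mem_union_right _ (by simp)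

lemma left_h2 {V : Type} {G : SimpleGraph V} {ω : Sym2 V → ℝ} {A B C D a b c d : V}
    {w x y z : ℝ} (hp : UrbanPatch G ω A B C D a b c d w x y z) :
    ∀ N ∈ {N : Finset (Sym2 V) | IsPM G Set.univ N ∧
        (s(a,A) ∈ N ∧ s(b,B) ∈ N ∧ s(c,C) ∈ N ∧ s(d,D) ∈ N)},
      N \ ({s(a,A), s(b,B), s(c,C), s(d,D)} : Finset (Sym2 V)) ∈ coreSet G A B C D a b c d ∧
      ({s(a,A), s(b,B), s(c,C), s(d,D)} : Finset (Sym2 V)) ⊆ N := by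
  have hdist := hp.distinct
  simp only [List.pairwise_cons, List.mem_cons, List.not_mem_nil, or_false, forall_eq_or_imp,
    forall_eq, List.Pairwise.nil, and_true] at hdist
  obtain ⟨⟨hAB, hAC, hAD, hAa, hAb, hAc, hAd⟩, ⟨hBC, hBD, hBa, hBb, hBc, hBd⟩,
    ⟨hCD, hCa, hCb, hCc, hCd⟩, ⟨hDa, hDb, hDc, hDd⟩, ⟨hab, hac, had⟩, ⟨hbc, hbd⟩, hcd, -⟩ := hdist
  rintro N ⟨⟨hNe, hNcov⟩, haA, hbB, hcC, hdD⟩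
  have uniq : ∀ v : V, ∀ e₁ ∈ N, v ∈ e₁ → ∀ e₂ ∈ N, v ∈ e₂ → e₁ = e₂ := by
    intro v e₁ h1 hv1 e₂ h2 hv2
    obtain ⟨e, -, hu⟩ := hNcov v (Set.mem_univ v)
    rw [hu e₁ ⟨h1, hv1⟩, hu e₂ ⟨h2, hv2⟩]
  have hET : ∀ e ∈ ({s(a,A), s(b,B), s(c,C), s(d,D)} : Finset (Sym2 V)), ∀ u ∈ e,
      u ∉ TSet A B C D a b c d := by
    intro e he u hu huT
    rw [mem_TSet] at huT
    simp only [Finset.mem_insert, Finset.mem_singleton] at he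
    rcases he with rfl | rfl | rfl | rfl <;> rw [Sym2.mem_iff] at hu <;>
      rcases hu with rfl | rfl <;> tauto
  have avoid : ∀ e ∈ N, e ∉ ({s(a,A), s(b,B), s(c,C), s(d,D)} : Finset (Sym2 V)) →
      ∀ v ∈ e, v ∈ TSet A B C D a b c d := by
    intro e heN heE v hv
    rw [mem_TSet]
    refine ⟨?_, ?_, ?_, ?_, ?_, ?_, ?_, ?_⟩ <;> intro h <;> apply heE
    · rw [uniq A e heN (h ▸ hv) s(a,A) haA (by simp)]; simp
    · rw [uniq B e heN (h ▸ hv) s(b,B) hbB (by simp)]; simp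
    · rw [uniq C e heN (h ▸ hv) s(c,C) hcC (by simp)]; simp
    · rw [uniq D e heN (h ▸ hv) s(d,D) hdD (by simp)]; simp
    · rw [uniq a e heN (h ▸ hv) s(a,A) haA (by simp)]; simp
    · rw [uniq b e heN (h ▸ hv) s(b,B) hbB (by simp)]; simp
    · rw [uniq c e heN (h ▸ hv) s(c,C) hcC (by simp)]; simp
    · rw [uniq d e heN (h ▸ hv) s(d,D) hdD (by simp)]; simp
  refine ⟨⟨?_, ?_, ?_⟩, ?_⟩
  · intro e he
    exact hNe e (Finset.mem_sdiff.1 he).1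
  · intro v hvT
    obtain ⟨e, ⟨heN, hve⟩, -⟩ := hNcov v (Set.mem_univ v)
    have heE : e ∉ ({s(a,A), s(b,B), s(c,C), s(d,D)} : Finset (Sym2 V)) :=
      fun h => hET e h v hve hvT
    refine cover_one (Finset.mem_sdiff.mpr ⟨heN, heE⟩) hve ?_
    intro e' he' hve'
    exact uniq v e' (Finset.mem_sdiff.1 he').1 hve' e heN hve
  · intro e he v hv
    obtain ⟨heN, heE⟩ := Finset.mem_sdiff.1 he
    exact avoid e heN heE v hv
  · intro e he
    simp only [Finset.mem_insert, Finset.mem_singleton] at he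
    rcases he with rfl | rfl | rfl | rfl <;> assumption

lemma renew_avoid {V : Type} {G : SimpleGraph V} {ω : Sym2 V → ℝ} {A B C D a b c d : V}
    {w x y z : ℝ} (hp : UrbanPatch G ω A B C D a b c d w x y z) :
    ∀ e ∈ (renewGraph G A B C D a b c d).edgeSet, ∀ v ∈ e,
      v ≠ a ∧ v ≠ b ∧ v ≠ c ∧ v ≠ d := by
  have hdist := hp.distinct
  simp only [List.pairwise_cons, List.mem_cons, List.not_mem_nil, or_false, forall_eq_or_imp,
    forall_eq, List.Pairwise.nil, and_true] at hdist
  obtain ⟨⟨hAB, hAC, hAD, hAa, hAb, hAc, hAd⟩, ⟨hBC, hBD, hBa, hBb, hBc, hBd⟩,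
    ⟨hCD, hCa, hCb, hCc, hCd⟩, ⟨hDa, hDb, hDc, hDd⟩, ⟨hab, hac, had⟩, ⟨hbc, hbd⟩, hcd, -⟩ := hdist
  intro e
  induction e using Sym2.ind with
  | _ u u' =>
    intro he v hv
    simp only [SimpleGraph.mem_edgeSet, renewGraph, SimpleGraph.fromRel_adj,
      Set.mem_insert_iff, Set.mem_singleton_iff, not_or] at he
    obtain ⟨-, hrel⟩ := he
    rw [Sym2.mem_iff] at hv
    rcases hv with rfl | rfl <;>
      rcases hrel with (⟨-, h1, h2⟩ | ⟨rfl, rfl⟩ | ⟨rfl, rfl⟩ | ⟨rfl, rfl⟩ | ⟨rfl, rfl⟩) |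
        (⟨-, h1, h2⟩ | ⟨rfl, rfl⟩ | ⟨rfl, rfl⟩ | ⟨rfl, rfl⟩ | ⟨rfl, rfl⟩)
    all_goals tauto

lemma renew_sub {V : Type} {G : SimpleGraph V} {ω : Sym2 V → ℝ} {A B C D a b c d : V}
    {w x y z : ℝ} (hp : UrbanPatch G ω A B C D a b c d w x y z) :
    ∀ e ∈ (renewGraph G A B C D a b c d).edgeSet,
      (∀ v ∈ e, v ∈ TSet A B C D a b c d) → e ∈ G.edgeSet := by
  intro e
  induction e using Sym2.ind with
  | _ u u' =>
    intro he hT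
    simp only [SimpleGraph.mem_edgeSet, renewGraph, SimpleGraph.fromRel_adj] at he ⊢
    obtain ⟨-, hrel⟩ := he
    have hu := mem_TSet.mp (hT u (by simp))
    have hu' := mem_TSet.mp (hT u' (by simp))
    rcases hrel with (⟨h, -, -⟩ | h | h | h | h) | (⟨h, -, -⟩ | h | h | h | h)
    · exact h
    · exact absurd h.1 hu.1
    · exact absurd h.1 hu.1
    · exact absurd h.1 hu.2.1
    · exact absurd h.1 hu.2.2.1
    · exact h.symm
    · exact absurd h.1 hu'.1
    · exact absurd h.1 hu'.1
    · exact absurd h.1 hu'.2.1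
    · exact absurd h.1 hu'.2.2.1

lemma renew_sup {V : Type} {G : SimpleGraph V} {ω : Sym2 V → ℝ} {A B C D a b c d : V}
    {w x y z : ℝ} (hp : UrbanPatch G ω A B C D a b c d w x y z) :
    ∀ e ∈ G.edgeSet, (∀ v ∈ e, v ∈ TSet A B C D a b c d) →
      e ∈ (renewGraph G A B C D a b c d).edgeSet := by
  intro e
  induction e using Sym2.ind with
  | _ u u' =>
    intro he hT
    simp only [SimpleGraph.mem_edgeSet, renewGraph, SimpleGraph.fromRel_adj] at he ⊢
    have hu := mem_TSet.mp (hT u (by simp))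
    have hu' := mem_TSet.mp (hT u' (by simp))
    refine ⟨he.ne, Or.inl (Or.inl ⟨he, ?_, ?_⟩)⟩ <;>
      simp only [Set.mem_insert_iff, Set.mem_singleton_iff, not_or] <;> tauto

lemma renew_AB {V : Type} {G : SimpleGraph V} {ω : Sym2 V → ℝ} {A B C D a b c d : V}
    {w x y z : ℝ} (hp : UrbanPatch G ω A B C D a b c d w x y z) :
    s(A,B) ∈ (renewGraph G A B C D a b c d).edgeSet ∧
    s(C,D) ∈ (renewGraph G A B C D a b c d).edgeSet ∧
    s(A,C) ∈ (renewGraph G A B C D a b c d).edgeSet ∧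
    s(B,D) ∈ (renewGraph G A B C D a b c d).edgeSet := by
  have hdist := hp.distinct
  simp only [List.pairwise_cons, List.mem_cons, List.not_mem_nil, or_false, forall_eq_or_imp,
    forall_eq, List.Pairwise.nil, and_true] at hdist
  obtain ⟨⟨hAB, hAC, hAD, hAa, hAb, hAc, hAd⟩, ⟨hBC, hBD, hBa, hBb, hBc, hBd⟩,
    ⟨hCD, hCa, hCb, hCc, hCd⟩, ⟨hDa, hDb, hDc, hDd⟩, ⟨hab, hac, had⟩, ⟨hbc, hbd⟩, hcd, -⟩ := hdist
  refine ⟨?_, ?_, ?_, ?_⟩ <;>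
    rw [SimpleGraph.mem_edgeSet, renewGraph, SimpleGraph.fromRel_adj]
  · exact ⟨hAB, Or.inl (Or.inr (Or.inl ⟨rfl, rfl⟩))⟩
  · exact ⟨hCD, Or.inl (Or.inr (Or.inr (Or.inr (Or.inr ⟨rfl, rfl⟩))))⟩
  · exact ⟨hAC, Or.inl (Or.inr (Or.inr (Or.inl ⟨rfl, rfl⟩)))⟩
  · exact ⟨hBD, Or.inl (Or.inr (Or.inr (Or.inr (Or.inl ⟨rfl, rfl⟩))))⟩

lemma right1_h1 {V : Type} {G : SimpleGraph V} {ω : Sym2 V → ℝ} {A B C D a b c d : V}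
    {w x y z : ℝ} (hp : UrbanPatch G ω A B C D a b c d w x y z) :
    ∀ M ∈ coreSet G A B C D a b c d,
      Disjoint M ({s(A,B), s(C,D)} : Finset (Sym2 V)) ∧
      M ∪ {s(A,B), s(C,D)} ∈
        {N : Finset (Sym2 V) | IsPM (renewGraph G A B C D a b c d) (Set.univ \ {a,b,c,d}) N ∧
          (s(A,B) ∈ N ∧ s(C,D) ∈ N)} := by
  have hdist := hp.distinct
  simp only [List.pairwise_cons, List.mem_cons, List.not_mem_nil, or_false, forall_eq_or_imp,
    forall_eq, List.Pairwise.nil, and_true] at hdist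
  obtain ⟨⟨hAB, hAC, hAD, hAa, hAb, hAc, hAd⟩, ⟨hBC, hBD, hBa, hBb, hBc, hBd⟩,
    ⟨hCD, hCa, hCb, hCc, hCd⟩, ⟨hDa, hDb, hDc, hDd⟩, ⟨hab, hac, had⟩, ⟨hbc, hbd⟩, hcd, -⟩ := hdist
  intro M hM
  obtain ⟨hMe, hMcov, hMT⟩ := hM
  have hET : ∀ e ∈ ({s(A,B), s(C,D)} : Finset (Sym2 V)), ∀ u ∈ e,
      u ∉ TSet A B C D a b c d := by
    intro e he u hu huT
    rw [mem_TSet] at huT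
    simp only [Finset.mem_insert, Finset.mem_singleton] at he
    rcases he with rfl | rfl <;> rw [Sym2.mem_iff] at hu <;>
      rcases hu with rfl | rfl <;> tauto
  have hdisj : Disjoint M ({s(A,B), s(C,D)} : Finset (Sym2 V)) := by
    rw [Finset.disjoint_left]
    intro e heM heE
    exact hET e heE e.out.1 (Sym2.out_fst_mem e) (hMT e heM e.out.1 (Sym2.out_fst_mem e))
  refine ⟨hdisj, ⟨?_, ?_⟩, ?_, ?_⟩
  · intro e he
    rcases Finset.mem_union.1 he with h | h
    · exact renew_sup hp e (hMe e h) (hMT e h)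
    · simp only [Finset.mem_insert, Finset.mem_singleton] at h
      rcases h with rfl | rfl
      · exact (renew_AB hp).1
      · exact (renew_AB hp).2.1
  · intro v hv
    by_cases hvT : v ∈ TSet A B C D a b c d
    · obtain ⟨e, ⟨heM, hve⟩, hu⟩ := hMcov v hvT
      refine cover_one (Finset.mem_union_left _ heM) hve ?_
      intro e' he' hve'
      rcases Finset.mem_union.1 he' with h | h
      · exact hu e' ⟨h, hve'⟩
      · exact absurd hvT (hET e' h v hve')
    · have hv4 : v ≠ a ∧ v ≠ b ∧ v ≠ c ∧ v ≠ d := by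
        have := hv.2
        simp only [Set.mem_insert_iff, Set.mem_singleton_iff, not_or] at this
        exact this
      have h4 : v = A ∨ v = B ∨ v = C ∨ v = D := by
        by_contra hc
        push_neg at hc
        exact hvT (mem_TSet.mpr ⟨hc.1, hc.2.1, hc.2.2.1, hc.2.2.2, hv4.1, hv4.2.1,
          hv4.2.2.1, hv4.2.2.2⟩)
      have hEuniq : ∀ e₁ ∈ ({s(A,B), s(C,D)} : Finset (Sym2 V)),
          ∀ e₂ ∈ ({s(A,B), s(C,D)} : Finset (Sym2 V)), v ∈ e₁ → v ∈ e₂ → e₁ = e₂ := by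
        intro e₁ h1 e₂ h2 hv1 hv2
        simp only [Finset.mem_insert, Finset.mem_singleton] at h1 h2
        rcases h1 with rfl | rfl <;> rcases h2 with rfl | rfl <;>
          first
          | rfl
          | (rw [Sym2.mem_iff] at hv1 hv2; exfalso;
             rcases hv1 with rfl | rfl <;> rcases hv2 with rfl | rfl <;> tauto)
      have hex : ∃ e₀ ∈ ({s(A,B), s(C,D)} : Finset (Sym2 V)), v ∈ e₀ := by
        rcases h4 with h | h | h | h
        · exact ⟨s(A,B), by simp, by simp [h]⟩
        · exact ⟨s(A,B), by simp, by simp [h]⟩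
        · exact ⟨s(C,D), by simp, by simp [h]⟩
        · exact ⟨s(C,D), by simp, by simp [h]⟩
      obtain ⟨e₀, he₀E, hve₀⟩ := hex
      refine cover_one (Finset.mem_union_right _ he₀E) hve₀ ?_
      intro e' he' hve'
      rcases Finset.mem_union.1 he' with h | h
      · exact absurd (hMT e' h v hve') hvT
      · exact hEuniq e' h e₀ he₀E hve' hve₀
  · exact Finset.mem_union_right _ (by simp)
  · exact Finset.mem_union_right _ (by simp)

lemma right1_h2 {V : Type} {G : SimpleGraph V} {ω : Sym2 V → ℝ} {A B C D a b c d : V}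
    {w x y z : ℝ} (hp : UrbanPatch G ω A B C D a b c d w x y z) :
    ∀ N ∈ {N : Finset (Sym2 V) | IsPM (renewGraph G A B C D a b c d) (Set.univ \ {a,b,c,d}) N ∧
        (s(A,B) ∈ N ∧ s(C,D) ∈ N)},
      N \ ({s(A,B), s(C,D)} : Finset (Sym2 V)) ∈ coreSet G A B C D a b c d ∧
      ({s(A,B), s(C,D)} : Finset (Sym2 V)) ⊆ N := by
  have hdist := hp.distinct
  simp only [List.pairwise_cons, List.mem_cons, List.not_mem_nil, or_false, forall_eq_or_imp,
    forall_eq, List.Pairwise.nil, and_true] at hdist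
  obtain ⟨⟨hAB, hAC, hAD, hAa, hAb, hAc, hAd⟩, ⟨hBC, hBD, hBa, hBb, hBc, hBd⟩,
    ⟨hCD, hCa, hCb, hCc, hCd⟩, ⟨hDa, hDb, hDc, hDd⟩, ⟨hab, hac, had⟩, ⟨hbc, hbd⟩, hcd, -⟩ := hdist
  rintro N ⟨⟨hNe, hNcov⟩, hABm, hCDm⟩
  have hAS : A ∈ Set.univ \ ({a,b,c,d} : Set V) := ⟨Set.mem_univ A, by
    simp only [Set.mem_insert_iff, Set.mem_singleton_iff, not_or]; exact ⟨hAa, hAb, hAc, hAd⟩⟩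
  have hBS : B ∈ Set.univ \ ({a,b,c,d} : Set V) := ⟨Set.mem_univ B, by
    simp only [Set.mem_insert_iff, Set.mem_singleton_iff, not_or]; exact ⟨hBa, hBb, hBc, hBd⟩⟩
  have hCS : C ∈ Set.univ \ ({a,b,c,d} : Set V) := ⟨Set.mem_univ C, by
    simp only [Set.mem_insert_iff, Set.mem_singleton_iff, not_or]; exact ⟨hCa, hCb, hCc, hCd⟩⟩
  have hDS : D ∈ Set.univ \ ({a,b,c,d} : Set V) := ⟨Set.mem_univ D, by
    simp only [Set.mem_insert_iff, Set.mem_singleton_iff, not_or]; exact ⟨hDa, hDb, hDc, hDd⟩⟩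
  have uniq : ∀ v ∈ Set.univ \ ({a,b,c,d} : Set V), ∀ e₁ ∈ N, v ∈ e₁ → ∀ e₂ ∈ N, v ∈ e₂ →
      e₁ = e₂ := by
    intro v hv e₁ h1 hv1 e₂ h2 hv2
    obtain ⟨e, -, hu⟩ := hNcov v hv
    rw [hu e₁ ⟨h1, hv1⟩, hu e₂ ⟨h2, hv2⟩]
  have hET : ∀ e ∈ ({s(A,B), s(C,D)} : Finset (Sym2 V)), ∀ u ∈ e,
      u ∉ TSet A B C D a b c d := by
    intro e he u hu huT
    rw [mem_TSet] at huT
    simp only [Finset.mem_insert, Finset.mem_singleton] at he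
    rcases he with rfl | rfl <;> rw [Sym2.mem_iff] at hu <;>
      rcases hu with rfl | rfl <;> tauto
  have avoid : ∀ e ∈ N, e ∉ ({s(A,B), s(C,D)} : Finset (Sym2 V)) →
      ∀ v ∈ e, v ∈ TSet A B C D a b c d := by
    intro e heN heE v hv
    have habcd := renew_avoid hp e (hNe e heN) v hv
    rw [mem_TSet]
    refine ⟨?_, ?_, ?_, ?_, habcd.1, habcd.2.1, habcd.2.2.1, habcd.2.2.2⟩ <;>
      intro h <;> apply heE
    · rw [uniq A hAS e heN (h ▸ hv) s(A,B) hABm (by simp)]; simp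
    · rw [uniq B hBS e heN (h ▸ hv) s(A,B) hABm (by simp)]; simp
    · rw [uniq C hCS e heN (h ▸ hv) s(C,D) hCDm (by simp)]; simp
    · rw [uniq D hDS e heN (h ▸ hv) s(C,D) hCDm (by simp)]; simp
  refine ⟨⟨?_, ?_, ?_⟩, ?_⟩
  · intro e he
    obtain ⟨heN, heE⟩ := Finset.mem_sdiff.1 he
    exact renew_sub hp e (hNe e heN) (avoid e heN heE)
  · intro v hvT
    have hvS : v ∈ Set.univ \ ({a,b,c,d} : Set V) := ⟨Set.mem_univ v, by
      rw [mem_TSet] at hvT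
      simp only [Set.mem_insert_iff, Set.mem_singleton_iff, not_or]
      exact ⟨hvT.2.2.2.2.1, hvT.2.2.2.2.2.1, hvT.2.2.2.2.2.2.1, hvT.2.2.2.2.2.2.2⟩⟩
    obtain ⟨e, ⟨heN, hve⟩, -⟩ := hNcov v hvS
    have heE : e ∉ ({s(A,B), s(C,D)} : Finset (Sym2 V)) := fun h => hET e h v hve hvT
    refine cover_one (Finset.mem_sdiff.mpr ⟨heN, heE⟩) hve ?_
    intro e' he' hve'
    exact uniq v hvS e' (Finset.mem_sdiff.1 he').1 hve' e heN hve
  · intro e he v hv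
    obtain ⟨heN, heE⟩ := Finset.mem_sdiff.1 he
    exact avoid e heN heE v hv
  · intro e he
    simp only [Finset.mem_insert, Finset.mem_singleton] at he
    rcases he with rfl | rfl <;> assumption

lemma right2_h1 {V : Type} {G : SimpleGraph V} {ω : Sym2 V → ℝ} {A B C D a b c d : V}
    {w x y z : ℝ} (hp : UrbanPatch G ω A B C D a b c d w x y z) :
    ∀ M ∈ coreSet G A B C D a b c d,
      Disjoint M ({s(A,C), s(B,D)} : Finset (Sym2 V)) ∧
      M ∪ {s(A,C), s(B,D)} ∈
        {N : Finset (Sym2 V) | IsPM (renewGraph G A B C D a b c d) (Set.univ \ {a,b,c,d}) N ∧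
          (s(A,C) ∈ N ∧ s(B,D) ∈ N)} := by
  have hdist := hp.distinct
  simp only [List.pairwise_cons, List.mem_cons, List.not_mem_nil, or_false, forall_eq_or_imp,
    forall_eq, List.Pairwise.nil, and_true] at hdist
  obtain ⟨⟨hAB, hAC, hAD, hAa, hAb, hAc, hAd⟩, ⟨hBC, hBD, hBa, hBb, hBc, hBd⟩,
    ⟨hCD, hCa, hCb, hCc, hCd⟩, ⟨hDa, hDb, hDc, hDd⟩, ⟨hab, hac, had⟩, ⟨hbc, hbd⟩, hcd, -⟩ := hdist
  intro M hM
  obtain ⟨hMe, hMcov, hMT⟩ := hM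
  have hET : ∀ e ∈ ({s(A,C), s(B,D)} : Finset (Sym2 V)), ∀ u ∈ e,
      u ∉ TSet A B C D a b c d := by
    intro e he u hu huT
    rw [mem_TSet] at huT
    simp only [Finset.mem_insert, Finset.mem_singleton] at he
    rcases he with rfl | rfl <;> rw [Sym2.mem_iff] at hu <;>
      rcases hu with rfl | rfl <;> tauto
  have hdisj : Disjoint M ({s(A,C), s(B,D)} : Finset (Sym2 V)) := by
    rw [Finset.disjoint_left]
    intro e heM heE
    exact hET e heE e.out.1 (Sym2.out_fst_mem e) (hMT e heM e.out.1 (Sym2.out_fst_mem e))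
  refine ⟨hdisj, ⟨?_, ?_⟩, ?_, ?_⟩
  · intro e he
    rcases Finset.mem_union.1 he with h | h
    · exact renew_sup hp e (hMe e h) (hMT e h)
    · simp only [Finset.mem_insert, Finset.mem_singleton] at h
      rcases h with rfl | rfl
      · exact (renew_AB hp).2.2.1
      · exact (renew_AB hp).2.2.2
  · intro v hv
    by_cases hvT : v ∈ TSet A B C D a b c d
    · obtain ⟨e, ⟨heM, hve⟩, hu⟩ := hMcov v hvT
      refine cover_one (Finset.mem_union_left _ heM) hve ?_
      intro e' he' hve'
      rcases Finset.mem_union.1 he' with h | h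
      · exact hu e' ⟨h, hve'⟩
      · exact absurd hvT (hET e' h v hve')
    · have hv4 : v ≠ a ∧ v ≠ b ∧ v ≠ c ∧ v ≠ d := by
        have := hv.2
        simp only [Set.mem_insert_iff, Set.mem_singleton_iff, not_or] at this
        exact this
      have h4 : v = A ∨ v = B ∨ v = C ∨ v = D := by
        by_contra hc
        push_neg at hc
        exact hvT (mem_TSet.mpr ⟨hc.1, hc.2.1, hc.2.2.1, hc.2.2.2, hv4.1, hv4.2.1,
          hv4.2.2.1, hv4.2.2.2⟩)
      have hEuniq : ∀ e₁ ∈ ({s(A,C), s(B,D)} : Finset (Sym2 V)),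
          ∀ e₂ ∈ ({s(A,C), s(B,D)} : Finset (Sym2 V)), v ∈ e₁ → v ∈ e₂ → e₁ = e₂ := by
        intro e₁ h1 e₂ h2 hv1 hv2
        simp only [Finset.mem_insert, Finset.mem_singleton] at h1 h2
        rcases h1 with rfl | rfl <;> rcases h2 with rfl | rfl <;>
          first
          | rfl
          | (rw [Sym2.mem_iff] at hv1 hv2; exfalso;
             rcases hv1 with rfl | rfl <;> rcases hv2 with rfl | rfl <;> tauto)
      have hex : ∃ e₀ ∈ ({s(A,C), s(B,D)} : Finset (Sym2 V)), v ∈ e₀ := by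
        rcases h4 with h | h | h | h
        · exact ⟨s(A,C), by simp, by simp [h]⟩
        · exact ⟨s(B,D), by simp, by simp [h]⟩
        · exact ⟨s(A,C), by simp, by simp [h]⟩
        · exact ⟨s(B,D), by simp, by simp [h]⟩
      obtain ⟨e₀, he₀E, hve₀⟩ := hex
      refine cover_one (Finset.mem_union_right _ he₀E) hve₀ ?_
      intro e' he' hve'
      rcases Finset.mem_union.1 he' with h | h
      · exact absurd (hMT e' h v hve') hvT
      · exact hEuniq e' h e₀ he₀E hve' hve₀
  · exact Finset.mem_union_right _ (by simp)
  · exact Finset.mem_union_right _ (by simp)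

lemma right2_h2 {V : Type} {G : SimpleGraph V} {ω : Sym2 V → ℝ} {A B C D a b c d : V}
    {w x y z : ℝ} (hp : UrbanPatch G ω A B C D a b c d w x y z) :
    ∀ N ∈ {N : Finset (Sym2 V) | IsPM (renewGraph G A B C D a b c d) (Set.univ \ {a,b,c,d}) N ∧
        (s(A,C) ∈ N ∧ s(B,D) ∈ N)},
      N \ ({s(A,C), s(B,D)} : Finset (Sym2 V)) ∈ coreSet G A B C D a b c d ∧
      ({s(A,C), s(B,D)} : Finset (Sym2 V)) ⊆ N := by
  have hdist := hp.distinct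
  simp only [List.pairwise_cons, List.mem_cons, List.not_mem_nil, or_false, forall_eq_or_imp,
    forall_eq, List.Pairwise.nil, and_true] at hdist
  obtain ⟨⟨hAB, hAC, hAD, hAa, hAb, hAc, hAd⟩, ⟨hBC, hBD, hBa, hBb, hBc, hBd⟩,
    ⟨hCD, hCa, hCb, hCc, hCd⟩, ⟨hDa, hDb, hDc, hDd⟩, ⟨hab, hac, had⟩, ⟨hbc, hbd⟩, hcd, -⟩ := hdist
  rintro N ⟨⟨hNe, hNcov⟩, hACm, hBDm⟩
  have hAS : A ∈ Set.univ \ ({a,b,c,d} : Set V) := ⟨Set.mem_univ A, by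
    simp only [Set.mem_insert_iff, Set.mem_singleton_iff, not_or]; exact ⟨hAa, hAb, hAc, hAd⟩⟩
  have hBS : B ∈ Set.univ \ ({a,b,c,d} : Set V) := ⟨Set.mem_univ B, by
    simp only [Set.mem_insert_iff, Set.mem_singleton_iff, not_or]; exact ⟨hBa, hBb, hBc, hBd⟩⟩
  have hCS : C ∈ Set.univ \ ({a,b,c,d} : Set V) := ⟨Set.mem_univ C, by
    simp only [Set.mem_insert_iff, Set.mem_singleton_iff, not_or]; exact ⟨hCa, hCb, hCc, hCd⟩⟩
  have hDS : D ∈ Set.univ \ ({a,b,c,d} : Set V) := ⟨Set.mem_univ D, by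
    simp only [Set.mem_insert_iff, Set.mem_singleton_iff, not_or]; exact ⟨hDa, hDb, hDc, hDd⟩⟩
  have uniq : ∀ v ∈ Set.univ \ ({a,b,c,d} : Set V), ∀ e₁ ∈ N, v ∈ e₁ → ∀ e₂ ∈ N, v ∈ e₂ →
      e₁ = e₂ := by
    intro v hv e₁ h1 hv1 e₂ h2 hv2
    obtain ⟨e, -, hu⟩ := hNcov v hv
    rw [hu e₁ ⟨h1, hv1⟩, hu e₂ ⟨h2, hv2⟩]
  have hET : ∀ e ∈ ({s(A,C), s(B,D)} : Finset (Sym2 V)), ∀ u ∈ e,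
      u ∉ TSet A B C D a b c d := by
    intro e he u hu huT
    rw [mem_TSet] at huT
    simp only [Finset.mem_insert, Finset.mem_singleton] at he
    rcases he with rfl | rfl <;> rw [Sym2.mem_iff] at hu <;>
      rcases hu with rfl | rfl <;> tauto
  have avoid : ∀ e ∈ N, e ∉ ({s(A,C), s(B,D)} : Finset (Sym2 V)) →
      ∀ v ∈ e, v ∈ TSet A B C D a b c d := by
    intro e heN heE v hv
    have habcd := renew_avoid hp e (hNe e heN) v hv
    rw [mem_TSet]
    refine ⟨?_, ?_, ?_, ?_, habcd.1, habcd.2.1, habcd.2.2.1, habcd.2.2.2⟩ <;>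
      intro h <;> apply heE
    · rw [uniq A hAS e heN (h ▸ hv) s(A,C) hACm (by simp)]; simp
    · rw [uniq B hBS e heN (h ▸ hv) s(B,D) hBDm (by simp)]; simp
    · rw [uniq C hCS e heN (h ▸ hv) s(A,C) hACm (by simp)]; simp
    · rw [uniq D hDS e heN (h ▸ hv) s(B,D) hBDm (by simp)]; simp
  refine ⟨⟨?_, ?_, ?_⟩, ?_⟩
  · intro e he
    obtain ⟨heN, heE⟩ := Finset.mem_sdiff.1 he
    exact renew_sub hp e (hNe e heN) (avoid e heN heE)
  · intro v hvT
    have hvS : v ∈ Set.univ \ ({a,b,c,d} : Set V) := ⟨Set.mem_univ v, by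
      rw [mem_TSet] at hvT
      simp only [Set.mem_insert_iff, Set.mem_singleton_iff, not_or]
      exact ⟨hvT.2.2.2.2.1, hvT.2.2.2.2.2.1, hvT.2.2.2.2.2.2.1, hvT.2.2.2.2.2.2.2⟩⟩
    obtain ⟨e, ⟨heN, hve⟩, -⟩ := hNcov v hvS
    have heE : e ∉ ({s(A,C), s(B,D)} : Finset (Sym2 V)) := fun h => hET e h v hve hvT
    refine cover_one (Finset.mem_sdiff.mpr ⟨heN, heE⟩) hve ?_
    intro e' he' hve'
    exact uniq v hvS e' (Finset.mem_sdiff.1 he').1 hve' e heN hve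
  · intro e he v hv
    obtain ⟨heN, heE⟩ := Finset.mem_sdiff.1 he
    exact avoid e heN heE v hv
  · intro e he
    simp only [Finset.mem_insert, Finset.mem_singleton] at he
    rcases he with rfl | rfl <;> assumption


set_option maxHeartbeats 1600000 in
/-- The total weight of the perfect matchings of `G` that contain all four pendant
edges `aA, bB, cC, dD` equals `(wz + xy)` times the total weight of the perfect
matchings of the urban-renewed graph `G'` that contain either both of the edges
`AB` and `CD`, or both of the edges `AC` and `BD`. -/
theorem urban_renewal_case_ABCD {V : Type} [Fintype V] (G : SimpleGraph V) (ω : Sym2 V → ℝ)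
    (A B C D a b c d : V) (w x y z : ℝ)
    (hnonneg : ∀ e ∈ G.edgeSet, 0 ≤ ω e)
    (hpatch : UrbanPatch G ω A B C D a b c d w x y z)
    (hwz : w * z + x * y ≠ 0) :
    mSumP G Set.univ ω
        (fun M => s(a, A) ∈ M ∧ s(b, B) ∈ M ∧ s(c, C) ∈ M ∧ s(d, D) ∈ M)
      = (w * z + x * y) *
        mSumP (renewGraph G A B C D a b c d) (Set.univ \ {a, b, c, d})
          (renewWeight ω A B C D w x y z)
          (fun M => (s(A, B) ∈ M ∧ s(C, D) ∈ M) ∨ (s(A, C) ∈ M ∧ s(B, D) ∈ M)) := by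
  have hdist := hpatch.distinct
  simp only [List.pairwise_cons, List.mem_cons, List.not_mem_nil, or_false, forall_eq_or_imp,
    forall_eq, List.Pairwise.nil, and_true] at hdist
  obtain ⟨⟨hAB, hAC, hAD, hAa, hAb, hAc, hAd⟩, ⟨hBC, hBD, hBa, hBb, hBc, hBd⟩,
    ⟨hCD, hCa, hCb, hCc, hCd⟩, ⟨hDa, hDb, hDc, hDd⟩, ⟨hab, hac, had⟩, ⟨hbc, hbd⟩, hcd, -⟩ := hdist
  have hBA := hAB.symm; have hCA := hAC.symm; have hDA := hAD.symm
  have hCB := hBC.symm; have hDB := hBD.symm; have hDC := hCD.symm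
  -- split the right-hand side set
  have hsplit : {M : Finset (Sym2 V) |
        IsPM (renewGraph G A B C D a b c d) (Set.univ \ {a, b, c, d}) M ∧
        ((s(A, B) ∈ M ∧ s(C, D) ∈ M) ∨ (s(A, C) ∈ M ∧ s(B, D) ∈ M))} =
      {N : Finset (Sym2 V) |
        IsPM (renewGraph G A B C D a b c d) (Set.univ \ {a, b, c, d}) N ∧
        (s(A, B) ∈ N ∧ s(C, D) ∈ N)} ∪
      {N : Finset (Sym2 V) |
        IsPM (renewGraph G A B C D a b c d) (Set.univ \ {a, b, c, d}) N ∧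
        (s(A, C) ∈ N ∧ s(B, D) ∈ N)} := by
    ext M
    simp only [Set.mem_setOf_eq, Set.mem_union]
    tauto
  have hABAC : (s(A,B) : Sym2 V) ≠ s(A,C) := by
    intro hEq; rw [Sym2.eq_iff] at hEq
    rcases hEq with ⟨-, h⟩ | ⟨h, -⟩
    exacts [hBC h, hAC h]
  have hdisjLR : Disjoint
      {N : Finset (Sym2 V) |
        IsPM (renewGraph G A B C D a b c d) (Set.univ \ {a, b, c, d}) N ∧
        (s(A, B) ∈ N ∧ s(C, D) ∈ N)}
      {N : Finset (Sym2 V) |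
        IsPM (renewGraph G A B C D a b c d) (Set.univ \ {a, b, c, d}) N ∧
        (s(A, C) ∈ N ∧ s(B, D) ∈ N)} := by
    rw [Set.disjoint_left]
    rintro M ⟨⟨-, hcov⟩, hABm, -⟩ ⟨-, hACm, -⟩
    have hAS : A ∈ Set.univ \ ({a,b,c,d} : Set V) := ⟨Set.mem_univ A, by
      simp only [Set.mem_insert_iff, Set.mem_singleton_iff, not_or]
      exact ⟨hAa, hAb, hAc, hAd⟩⟩
    obtain ⟨e, -, hu⟩ := hcov A hAS
    exact hABAC ((hu s(A,B) ⟨hABm, by simp⟩).trans (hu s(A,C) ⟨hACm, by simp⟩).symm)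
  -- weight congruence on the core
  have hcong : ∑ᶠ M ∈ coreSet G A B C D a b c d, ∏ e ∈ M,
        renewWeight ω A B C D w x y z e
      = ∑ᶠ M ∈ coreSet G A B C D a b c d, ∏ e ∈ M, ω e := by
    apply finsum_mem_congr rfl
    intro M hM
    obtain ⟨-, -, hMT⟩ := hM
    apply Finset.prod_congr rfl
    intro e he
    have hT := hMT e he
    have hne : ∀ u v' : V, u ∉ TSet A B C D a b c d → e ≠ s(u, v') := by
      intro u v' hu h
      exact hu (hT u (by rw [h]; simp))
    have h1 : e ≠ s(A,B) := hne A B (fun h => (mem_TSet.mp h).1 rfl)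
    have h2 : e ≠ s(A,C) := hne A C (fun h => (mem_TSet.mp h).1 rfl)
    have h3 : e ≠ s(B,D) := hne B D (fun h => (mem_TSet.mp h).2.1 rfl)
    have h4 : e ≠ s(C,D) := hne C D (fun h => (mem_TSet.mp h).2.2.1 rfl)
    simp [renewWeight, h1, h2, h3, h4]
  -- edge weight products
  have hprodL : ∏ e ∈ ({s(a,A), s(b,B), s(c,C), s(d,D)} : Finset (Sym2 V)), ω e = 1 := by
    apply Finset.prod_eq_one
    intro e he
    simp only [Finset.mem_insert, Finset.mem_singleton] at he
    rcases he with rfl | rfl | rfl | rfl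
    · exact hpatch.wt_aA
    · exact hpatch.wt_bB
    · exact hpatch.wt_cC
    · exact hpatch.wt_dD
  have e1 : (s(A,B) : Sym2 V) ≠ s(C,D) := by
    intro hEq; rw [Sym2.eq_iff] at hEq
    rcases hEq with ⟨h, -⟩ | ⟨h, -⟩
    exacts [hAC h, hAD h]
  have e2 : (s(C,D) : Sym2 V) ≠ s(A,B) := by
    intro hEq; rw [Sym2.eq_iff] at hEq
    rcases hEq with ⟨h, -⟩ | ⟨h, -⟩
    exacts [hCA h, hCB h]
  have e3 : (s(C,D) : Sym2 V) ≠ s(A,C) := by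
    intro hEq; rw [Sym2.eq_iff] at hEq
    rcases hEq with ⟨h, -⟩ | ⟨-, h⟩
    exacts [hCA h, hDA h]
  have e4 : (s(C,D) : Sym2 V) ≠ s(B,D) := by
    intro hEq; rw [Sym2.eq_iff] at hEq
    rcases hEq with ⟨h, -⟩ | ⟨h, -⟩
    exacts [hCB h, hCD h]
  have f1 : (s(A,C) : Sym2 V) ≠ s(B,D) := by
    intro hEq; rw [Sym2.eq_iff] at hEq
    rcases hEq with ⟨h, -⟩ | ⟨h, -⟩
    exacts [hAB h, hAD h]
  have f2 : (s(A,C) : Sym2 V) ≠ s(A,B) := by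
    intro hEq; rw [Sym2.eq_iff] at hEq
    rcases hEq with ⟨-, h⟩ | ⟨h, -⟩
    exacts [hCB h, hAB h]
  have f3 : (s(B,D) : Sym2 V) ≠ s(A,B) := by
    intro hEq; rw [Sym2.eq_iff] at hEq
    rcases hEq with ⟨h, -⟩ | ⟨-, h⟩
    exacts [hBA h, hDA h]
  have f4 : (s(B,D) : Sym2 V) ≠ s(A,C) := by
    intro hEq; rw [Sym2.eq_iff] at hEq
    rcases hEq with ⟨h, -⟩ | ⟨h, -⟩
    exacts [hBA h, hBC h]
  have hprod1 : ∏ e ∈ ({s(A,B), s(C,D)} : Finset (Sym2 V)),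
      renewWeight ω A B C D w x y z e
      = z / (w * z + x * y) * (w / (w * z + x * y)) := by
    rw [Finset.prod_insert (by simpa using e1), Finset.prod_singleton]
    congr 1
    · simp [renewWeight]
    · simp [renewWeight, e2, e3, e4]
  have hprod2 : ∏ e ∈ ({s(A,C), s(B,D)} : Finset (Sym2 V)),
      renewWeight ω A B C D w x y z e
      = y / (w * z + x * y) * (x / (w * z + x * y)) := by
    rw [Finset.prod_insert (by simpa using f1), Finset.prod_singleton]
    congr 1
    · simp [renewWeight, f2]
    · simp [renewWeight, f3, f4]
  simp only [mSumP]
  rw [union_sum ω ({s(a,A), s(b,B), s(c,C), s(d,D)} : Finset (Sym2 V)) _ _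
      (left_h1 hpatch) (left_h2 hpatch),
    hsplit, finsum_mem_union hdisjLR (Set.toFinite _) (Set.toFinite _),
    union_sum (renewWeight ω A B C D w x y z) ({s(A,B), s(C,D)} : Finset (Sym2 V)) _ _
      (right1_h1 hpatch) (right1_h2 hpatch),
    union_sum (renewWeight ω A B C D w x y z) ({s(A,C), s(B,D)} : Finset (Sym2 V)) _ _
      (right2_h1 hpatch) (right2_h2 hpatch),
    hcong, hprodL, hprod1, hprod2, one_mul]
  field_simp
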